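/- For every edge-weighted hypergraph H = (V,E,w) with |V| ≥ 2, γ₂ = ζ₂. -/

import Mathlib

open Finset

/-- An edge-weighted hypergraph on a finite vertex set `V`: a finite set of hyperedges,
each a nonempty subset of `V`, with positive weights. -/
structure WHypergraph (V : Type*) [Fintype V] [DecidableEq V] where
  E : Finset (Finset V)
  w : Finset V → ℝ
  edge_nonempty : ∀ e ∈ E, e.Nonempty
  w_pos : ∀ e ∈ E, 0 < w e

namespace WHypergraph

variable {V : Type*} [Fintype V] [DecidableEq V]

/-- The weight of a vertex: total weight of hyperedges containing it. -/
noncomputable def wv (H : WHypergraph V) (v : V) : ℝ :=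
  ∑ e ∈ H.E.filter (fun e => v ∈ e), H.w e

/-- The weight of a set of vertices. -/
noncomputable def wS (H : WHypergraph V) (S : Finset V) : ℝ := ∑ v ∈ S, H.wv v

/-- The boundary of `S`: hyperedges meeting both `S` and its complement. -/
noncomputable def bdry (H : WHypergraph V) (S : Finset V) : Finset (Finset V) :=
  H.E.filter (fun e => (e ∩ S).Nonempty ∧ (e \ S).Nonempty)

/-- The expansion `φ(S)` of a set of vertices. -/
noncomputable def phi (H : WHypergraph V) (S : Finset V) : ℝ :=
  (∑ e ∈ H.bdry S, H.w e) / H.wS S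

/-- `max_{u,v ∈ e} (f u - f v)^2`. -/
noncomputable def edgeDisc (H : WHypergraph V) (f : V → ℝ) (e : Finset V) : ℝ :=
  sSup {x : ℝ | ∃ u ∈ e, ∃ v ∈ e, (f u - f v) ^ 2 = x}

/-- The discrepancy ratio `D_w(f)`. -/
noncomputable def disc (H : WHypergraph V) (f : V → ℝ) : ℝ :=
  (∑ e ∈ H.E, H.w e * H.edgeDisc f e) / ∑ u : V, H.wv u * f u ^ 2

/-- The weighted inner product `⟨f,g⟩_w`. -/
noncomputable def wip (H : WHypergraph V) (f g : V → ℝ) : ℝ :=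
  ∑ u : V, H.wv u * f u * g u

/-- `γ₂`: infimum of the discrepancy ratio over nonzero `f ⊥_w 1`. -/
noncomputable def gamma2 (H : WHypergraph V) : ℝ :=
  sInf {x : ℝ | ∃ f : V → ℝ, f ≠ 0 ∧ H.wip f (fun _ => 1) = 0 ∧ H.disc f = x}

/-- The hypergraph expansion `φ_H`. -/
noncomputable def phiH (H : WHypergraph V) : ℝ :=
  sInf {x : ℝ | ∃ S : Finset V, S.Nonempty ∧ S ≠ univ ∧
    x = max (H.phi S) (H.phi Sᶜ)}

/-- `ζ_k`: inf over `k`-tuples of nonzero pairwise `w`-orthogonal vectors of the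
sup of the discrepancy ratio over nonzero vectors in their span. -/
noncomputable def zeta (H : WHypergraph V) (k : ℕ) : ℝ :=
  sInf {x : ℝ | ∃ f : Fin k → V → ℝ, (∀ i, f i ≠ 0) ∧
    (∀ i j, i ≠ j → H.wip (f i) (f j) = 0) ∧
    x = sSup {y : ℝ | ∃ h : V → ℝ, h ≠ 0 ∧
      h ∈ Submodule.span ℝ (Set.range f) ∧ H.disc h = y}}

/-- `ξ_k`: inf over `k`-tuples of nonzero pairwise `w`-orthogonal vectors of the
maximum discrepancy ratio among them. -/
noncomputable def xi (H : WHypergraph V) (k : ℕ) : ℝ :=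
  sInf {x : ℝ | ∃ f : Fin k → V → ℝ, (∀ i, f i ≠ 0) ∧
    (∀ i j, i ≠ j → H.wip (f i) (f j) = 0) ∧
    x = sSup {y : ℝ | ∃ i, H.disc (f i) = y}}

/-- A sequence of procedural minimizers: `f 0` is a nonzero constant vector, each `f i`
is nonzero and `w`-orthogonal to the previous ones, and attains the infimum of the
discrepancy ratio over nonzero vectors `w`-orthogonal to the previous ones. -/
def IsProcMin (H : WHypergraph V) {k : ℕ} (f : Fin k → V → ℝ) : Prop :=
  (∀ i, f i ≠ 0) ∧
  (∀ i : Fin k, (i : ℕ) = 0 → ∃ c : ℝ, f i = fun _ => c) ∧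
  (∀ i j : Fin k, (j : ℕ) < (i : ℕ) → H.wip (f i) (f j) = 0) ∧
  (∀ i : Fin k, 0 < (i : ℕ) → H.disc (f i) =
    sInf {x : ℝ | ∃ g : V → ℝ, g ≠ 0 ∧
      (∀ j : Fin k, (j : ℕ) < (i : ℕ) → H.wip g (f j) = 0) ∧ H.disc g = x})

end WHypergraph


section Aux

namespace WHypergraph

variable {V : Type*} [Fintype V] [DecidableEq V] (H : WHypergraph V)

lemma edgeDisc_set_eq (f : V → ℝ) (e : Finset V) :
    {x : ℝ | ∃ u ∈ e, ∃ v ∈ e, (f u - f v) ^ 2 = x} =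
      ↑((e ×ˢ e).image fun p => (f p.1 - f p.2) ^ 2) := by
  ext x
  simp only [Set.mem_setOf_eq, coe_image, Set.mem_image, mem_coe, mem_product]
  constructor
  · rintro ⟨u, hu, v, hv, h⟩; exact ⟨(u, v), ⟨hu, hv⟩, h⟩
  · rintro ⟨⟨u, v⟩, ⟨hu, hv⟩, h⟩; exact ⟨u, hu, v, hv, h⟩

lemma le_edgeDisc (f : V → ℝ) {e : Finset V} {u v : V} (hu : u ∈ e) (hv : v ∈ e) :
    (f u - f v) ^ 2 ≤ H.edgeDisc f e := by
  rw [edgeDisc, edgeDisc_set_eq]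
  exact le_csSup (Finset.bddAbove _)
    (by simp only [coe_image, Set.mem_image, mem_coe, mem_product]
        exact ⟨(u, v), ⟨hu, hv⟩, rfl⟩)

lemma edgeDisc_nonneg (f : V → ℝ) {e : Finset V} (he : e.Nonempty) :
    0 ≤ H.edgeDisc f e := by
  obtain ⟨u, hu⟩ := he
  have := H.le_edgeDisc f hu hu
  simpa using this

lemma exists_edgeDisc (f : V → ℝ) {e : Finset V} (he : e.Nonempty) :
    ∃ u ∈ e, ∃ v ∈ e, H.edgeDisc f e = (f u - f v) ^ 2 := by
  have hmem : H.edgeDisc f e ∈ {x : ℝ | ∃ u ∈ e, ∃ v ∈ e, (f u - f v) ^ 2 = x} := by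
    apply Set.Nonempty.csSup_mem
    · obtain ⟨u, hu⟩ := he
      exact ⟨(f u - f u) ^ 2, u, hu, u, hu, rfl⟩
    · rw [edgeDisc_set_eq]; exact (Finset.finite_toSet _)
  obtain ⟨u, hu, v, hv, h⟩ := hmem
  exact ⟨u, hu, v, hv, h.symm⟩

lemma edgeDisc_affine (a b : ℝ) (g : V → ℝ) {e : Finset V} (he : e.Nonempty) :
    H.edgeDisc (fun u => a + b * g u) e = b ^ 2 * H.edgeDisc g e := by
  set h : V → ℝ := fun u => a + b * g u with hh
  apply le_antisymm
  · obtain ⟨u, hu, v, hv, heq⟩ := H.exists_edgeDisc h he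
    rw [heq]
    have : (h u - h v) ^ 2 = b ^ 2 * (g u - g v) ^ 2 := by simp only [hh]; ring
    rw [this]
    exact mul_le_mul_of_nonneg_left (H.le_edgeDisc g hu hv) (sq_nonneg b)
  · obtain ⟨u, hu, v, hv, heq⟩ := H.exists_edgeDisc g he
    rw [heq]
    have : b ^ 2 * (g u - g v) ^ 2 = (h u - h v) ^ 2 := by simp only [hh]; ring
    rw [this]
    exact H.le_edgeDisc h hu hv

lemma wv_nonneg (v : V) : 0 ≤ H.wv v := by
  apply Finset.sum_nonneg
  intro e he
  exact (H.w_pos e (Finset.mem_filter.1 he).1).le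

lemma den_nonneg (f : V → ℝ) : 0 ≤ ∑ u : V, H.wv u * f u ^ 2 := by
  apply Finset.sum_nonneg
  intro u _
  exact mul_nonneg (H.wv_nonneg u) (sq_nonneg _)

lemma den_pos (hw : ∀ v : V, 0 < H.wv v) {f : V → ℝ} (hf : f ≠ 0) :
    0 < ∑ u : V, H.wv u * f u ^ 2 := by
  obtain ⟨u, hu⟩ : ∃ u, f u ≠ 0 := by
    by_contra h
    push_neg at h
    exact hf (funext h)
  apply Finset.sum_pos'
  · intro v _; exact mul_nonneg (H.wv_nonneg v) (sq_nonneg _)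
  · exact ⟨u, Finset.mem_univ u, mul_pos (hw u) (by positivity)⟩

lemma num_nonneg (f : V → ℝ) : 0 ≤ ∑ e ∈ H.E, H.w e * H.edgeDisc f e := by
  apply Finset.sum_nonneg
  intro e he
  exact mul_nonneg (H.w_pos e he).le (H.edgeDisc_nonneg f (H.edge_nonempty e he))

lemma disc_nonneg (f : V → ℝ) : 0 ≤ H.disc f :=
  div_nonneg (H.num_nonneg f) (H.den_nonneg f)

lemma exists_bound (hw : ∀ v : V, 0 < H.wv v) [Nonempty V] :
    ∃ C : ℝ, ∀ f : V → ℝ, f ≠ 0 → H.disc f ≤ C := by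
  have hne : (Finset.univ : Finset V).Nonempty := Finset.univ_nonempty
  set m : ℝ := Finset.univ.inf' hne H.wv with hm
  have hmpos : 0 < m := by
    rw [hm, Finset.lt_inf'_iff]
    exact fun v _ => hw v
  set W : ℝ := ∑ e ∈ H.E, H.w e with hW
  have hWnn : 0 ≤ W := Finset.sum_nonneg fun e he => (H.w_pos e he).le
  refine ⟨4 * W / m, ?_⟩
  intro f hf
  set T : ℝ := ∑ u : V, f u ^ 2 with hT
  have hTnn : 0 ≤ T := Finset.sum_nonneg fun u _ => sq_nonneg _
  have hden : 0 < ∑ u : V, H.wv u * f u ^ 2 := H.den_pos hw hf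
  rw [disc, div_le_iff₀ hden]
  have hnum : ∑ e ∈ H.E, H.w e * H.edgeDisc f e ≤ W * (4 * T) := by
    rw [hW, Finset.sum_mul]
    apply Finset.sum_le_sum
    intro e he
    apply mul_le_mul_of_nonneg_left _ (H.w_pos e he).le
    obtain ⟨u, hu, v, hv, heq⟩ := H.exists_edgeDisc f (H.edge_nonempty e he)
    rw [heq]
    have hu2 : f u ^ 2 ≤ T := Finset.single_le_sum (fun x _ => sq_nonneg (f x)) (Finset.mem_univ u)
    have hv2 : f v ^ 2 ≤ T := Finset.single_le_sum (fun x _ => sq_nonneg (f x)) (Finset.mem_univ v)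
    nlinarith [sq_nonneg (f u + f v)]
  have hdenT : m * T ≤ ∑ u : V, H.wv u * f u ^ 2 := by
    rw [hT, Finset.mul_sum]
    apply Finset.sum_le_sum
    intro u _
    exact mul_le_mul_of_nonneg_right (Finset.inf'_le H.wv (Finset.mem_univ u)) (sq_nonneg _)
  have hCnn : 0 ≤ 4 * W / m := by positivity
  calc ∑ e ∈ H.E, H.w e * H.edgeDisc f e ≤ W * (4 * T) := hnum
    _ = 4 * W / m * (m * T) := by field_simp
    _ ≤ 4 * W / m * ∑ u : V, H.wv u * f u ^ 2 := by
        exact mul_le_mul_of_nonneg_left hdenT hCnn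

lemma wip_comm (f g : V → ℝ) : H.wip f g = H.wip g f := by
  unfold wip
  exact Finset.sum_congr rfl fun u _ => by ring

lemma wip_pos (hw : ∀ v : V, 0 < H.wv v) {f : V → ℝ} (hf : f ≠ 0) :
    0 < H.wip f f := by
  have : H.wip f f = ∑ u : V, H.wv u * f u ^ 2 := by
    unfold wip; exact Finset.sum_congr rfl fun u _ => by ring
  rw [this]
  exact H.den_pos hw hf

lemma wip_sub_smul (a b : ℝ) (f₀ f₁ g : V → ℝ) :
    H.wip (b • f₀ - a • f₁) g = b * H.wip f₀ g - a * H.wip f₁ g := by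
  unfold wip
  rw [Finset.mul_sum, Finset.mul_sum, ← Finset.sum_sub_distrib]
  apply Finset.sum_congr rfl
  intro u _
  simp only [Pi.sub_apply, Pi.smul_apply, smul_eq_mul]
  ring

lemma wip_smul_sub (a b : ℝ) (f₀ f₁ g : V → ℝ) :
    H.wip g (b • f₀ - a • f₁) = b * H.wip g f₀ - a * H.wip g f₁ := by
  rw [H.wip_comm, H.wip_sub_smul, H.wip_comm f₀, H.wip_comm f₁]

lemma exists_orth (hw : ∀ v : V, 0 < H.wv v) (f : Fin 2 → V → ℝ)
    (h0 : ∀ i, f i ≠ 0) (horth : ∀ i j, i ≠ j → H.wip (f i) (f j) = 0) :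
    ∃ h : V → ℝ, h ≠ 0 ∧ h ∈ Submodule.span ℝ (Set.range f) ∧
      H.wip h (fun _ => 1) = 0 := by
  set a : ℝ := H.wip (f 0) (fun _ => 1) with ha
  set b : ℝ := H.wip (f 1) (fun _ => 1) with hb
  by_cases hbz : b = 0
  · exact ⟨f 1, h0 1, Submodule.subset_span ⟨1, rfl⟩, hbz⟩
  · refine ⟨b • f 0 - a • f 1, ?_, ?_, ?_⟩
    · intro hz
      have hpos : 0 < H.wip (b • f 0 - a • f 1) (b • f 0 - a • f 1) := by
        rw [H.wip_sub_smul, H.wip_smul_sub, H.wip_smul_sub,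
          horth 0 1 (by decide), horth 1 0 (by decide)]
        have h00 : 0 < H.wip (f 0) (f 0) := H.wip_pos hw (h0 0)
        have h11 : 0 < H.wip (f 1) (f 1) := H.wip_pos hw (h0 1)
        have hb2 : 0 < b ^ 2 := by positivity
        nlinarith [sq_nonneg a, mul_pos hb2 h00, mul_nonneg (sq_nonneg a) h11.le]
      rw [hz] at hpos
      simp [wip] at hpos
    · exact Submodule.sub_mem _
        (Submodule.smul_mem _ _ (Submodule.subset_span ⟨0, rfl⟩))
        (Submodule.smul_mem _ _ (Submodule.subset_span ⟨1, rfl⟩))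
    · rw [H.wip_sub_smul, ← ha, ← hb]; ring

lemma disc_affine_le (hw : ∀ v : V, 0 < H.wv v) {g : V → ℝ} (hg : g ≠ 0)
    (hog : H.wip g (fun _ => 1) = 0) (a b : ℝ) :
    H.disc (fun u => a + b * g u) ≤ H.disc g := by
  set h : V → ℝ := fun u => a + b * g u with hh
  have hnum : ∑ e ∈ H.E, H.w e * H.edgeDisc h e =
      b ^ 2 * ∑ e ∈ H.E, H.w e * H.edgeDisc g e := by
    rw [Finset.mul_sum]
    apply Finset.sum_congr rfl
    intro e he
    rw [hh, H.edgeDisc_affine a b g (H.edge_nonempty e he)]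
    ring
  have hWnn : 0 ≤ ∑ u : V, H.wv u := Finset.sum_nonneg fun u _ => (H.wv_nonneg u)
  have hden : ∑ u : V, H.wv u * h u ^ 2 =
      a ^ 2 * (∑ u : V, H.wv u) + b ^ 2 * ∑ u : V, H.wv u * g u ^ 2 := by
    have hlin : ∑ u : V, H.wv u * g u = 0 := by
      rw [← hog]; unfold wip; exact Finset.sum_congr rfl fun u _ => by ring
    have expand : ∀ u : V, H.wv u * h u ^ 2 =
        a ^ 2 * H.wv u + 2 * a * b * (H.wv u * g u) + b ^ 2 * (H.wv u * g u ^ 2) := by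
      intro u; rw [hh]; ring
    rw [Finset.sum_congr rfl fun u _ => expand u]
    rw [Finset.sum_add_distrib, Finset.sum_add_distrib, ← Finset.mul_sum, ← Finset.mul_sum,
      ← Finset.mul_sum, hlin]
    ring
  by_cases hb : b = 0
  · have : H.disc h = 0 := by
      rw [disc, hnum, hb]
      simp
    rw [this]
    exact H.disc_nonneg g
  · have hdg : 0 < ∑ u : V, H.wv u * g u ^ 2 := H.den_pos hw hg
    have hb2 : 0 < b ^ 2 := by positivity
    rw [disc, disc, hnum, hden]
    have h1 : b ^ 2 * (∑ u : V, H.wv u * g u ^ 2) ≤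
        a ^ 2 * (∑ u : V, H.wv u) + b ^ 2 * ∑ u : V, H.wv u * g u ^ 2 := by
      nlinarith [sq_nonneg a]
    calc b ^ 2 * (∑ e ∈ H.E, H.w e * H.edgeDisc g e) /
          (a ^ 2 * (∑ u : V, H.wv u) + b ^ 2 * ∑ u : V, H.wv u * g u ^ 2)
        ≤ b ^ 2 * (∑ e ∈ H.E, H.w e * H.edgeDisc g e) /
          (b ^ 2 * ∑ u : V, H.wv u * g u ^ 2) := by
          apply div_le_div_of_nonneg_left _ (by positivity) h1
          exact mul_nonneg hb2.le (H.num_nonneg g)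
      _ = (∑ e ∈ H.E, H.w e * H.edgeDisc g e) / ∑ u : V, H.wv u * g u ^ 2 := by
          rw [mul_div_mul_left _ _ (ne_of_gt hb2)]

end WHypergraph

end Aux

/-- `γ₂ = ζ₂` for every edge-weighted hypergraph with at least two vertices. -/
theorem gamma2_eq_zeta2 {V : Type*} [Fintype V] [DecidableEq V]
    (H : WHypergraph V) (hV : 2 ≤ Fintype.card V) (hw : ∀ v : V, 0 < H.wv v) :
    H.gamma2 = H.zeta 2 := by
  classical
  have hne : Nonempty V := Fintype.card_pos_iff.mp (by omega)
  obtain ⟨u, v, huv⟩ := Fintype.exists_pair_of_one_lt_card hV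
  obtain ⟨C, hC⟩ := H.exists_bound hw
  -- a special nonzero vector orthogonal to 1
  set g0 : V → ℝ := fun x => if x = u then H.wv v else if x = v then -H.wv u else 0 with hg0
  have hg0u : g0 u = H.wv v := by simp [hg0]
  have hg0ne : g0 ≠ 0 := by
    intro h
    have h2 := congrFun h u
    rw [hg0u] at h2
    exact absurd h2 (ne_of_gt (hw v))
  have hg0orth : H.wip g0 (fun _ => 1) = 0 := by
    unfold WHypergraph.wip
    rw [Finset.sum_eq_add_of_mem u v (Finset.mem_univ u) (Finset.mem_univ v) huv
      (by intro c _ hc; simp [hg0, hc.1, hc.2])]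
    simp [hg0, huv, Ne.symm huv]
    ring
  -- the two sets
  set S1 : Set ℝ :=
    {x : ℝ | ∃ f : V → ℝ, f ≠ 0 ∧ H.wip f (fun _ => 1) = 0 ∧ H.disc f = x} with hS1
  set S2 : Set ℝ :=
    {x : ℝ | ∃ f : Fin 2 → V → ℝ, (∀ i, f i ≠ 0) ∧
      (∀ i j, i ≠ j → H.wip (f i) (f j) = 0) ∧
      x = sSup {y : ℝ | ∃ h : V → ℝ, h ≠ 0 ∧
        h ∈ Submodule.span ℝ (Set.range f) ∧ H.disc h = y}} with hS2
  have hS1ne : S1.Nonempty := ⟨H.disc g0, g0, hg0ne, hg0orth, rfl⟩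
  have hS1bdd : BddBelow S1 := by
    refine ⟨0, ?_⟩
    rintro x ⟨f, hf, hof, rfl⟩
    exact H.disc_nonneg f
  have hone : (fun _ : V => (1 : ℝ)) ≠ 0 := by
    intro h
    obtain ⟨v0⟩ := hne
    have := congrFun h v0
    simp at this
  -- a helper: the pair (1, g) for any g orthogonal to 1
  have pair_props : ∀ g : V → ℝ, g ≠ 0 → H.wip g (fun _ => 1) = 0 →
      (∀ i, (![fun _ => (1:ℝ), g] : Fin 2 → V → ℝ) i ≠ 0) ∧
      (∀ i j, i ≠ j →
        H.wip ((![fun _ => (1:ℝ), g] : Fin 2 → V → ℝ) i)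
          ((![fun _ => (1:ℝ), g] : Fin 2 → V → ℝ) j) = 0) := by
    intro g hgne hgo
    constructor
    · intro i
      fin_cases i
      · exact hone
      · exact hgne
    · intro i j hij
      fin_cases i <;> fin_cases j <;>
        simp_all [Matrix.cons_val_zero, Matrix.cons_val_one, Matrix.head_cons]
      · rw [H.wip_comm]; exact hgo
  have hrange : ∀ g : V → ℝ,
      Set.range (![fun _ => (1:ℝ), g] : Fin 2 → V → ℝ) = {fun _ => (1:ℝ), g} := by
    intro g
    ext x
    simp [Fin.exists_fin_two, or_comm]
  have supBdd : ∀ f : Fin 2 → V → ℝ,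
      BddAbove {y : ℝ | ∃ h : V → ℝ, h ≠ 0 ∧
        h ∈ Submodule.span ℝ (Set.range f) ∧ H.disc h = y} := by
    intro f
    refine ⟨C, ?_⟩
    rintro y ⟨h, hhne, _, rfl⟩
    exact hC h hhne
  have hS2bdd : BddBelow S2 := by
    refine ⟨0, ?_⟩
    rintro x ⟨f, hfne, hforth, rfl⟩
    refine le_trans (H.disc_nonneg (f 0)) (le_csSup (supBdd f) ?_)
    exact ⟨f 0, hfne 0, Submodule.subset_span ⟨0, rfl⟩, rfl⟩
  have hS2ne : S2.Nonempty := by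
    obtain ⟨hpne, hporth⟩ := pair_props g0 hg0ne hg0orth
    exact ⟨_, ![fun _ => (1:ℝ), g0], hpne, hporth, rfl⟩
  show sInf S1 = sInf S2
  apply le_antisymm
  · -- gamma2 ≤ zeta2
    apply le_csInf hS2ne
    rintro x ⟨f, hfne, hforth, rfl⟩
    obtain ⟨h, hhne, hhsp, hho⟩ := H.exists_orth hw f hfne hforth
    refine le_trans (csInf_le hS1bdd ⟨h, hhne, hho, rfl⟩) ?_
    exact le_csSup (supBdd f) ⟨h, hhne, hhsp, rfl⟩
  · -- zeta2 ≤ gamma2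
    apply le_csInf hS1ne
    rintro x ⟨g, hgne, hgo, rfl⟩
    obtain ⟨hpne, hporth⟩ := pair_props g hgne hgo
    refine le_trans (csInf_le hS2bdd ⟨![fun _ => (1:ℝ), g], hpne, hporth, rfl⟩) ?_
    apply Real.sSup_le _ (H.disc_nonneg g)
    rintro y ⟨h, hhne, hhsp, rfl⟩
    rw [hrange g] at hhsp
    obtain ⟨c, d, hcd⟩ := Submodule.mem_span_pair.mp hhsp
    have hh : h = fun w => c + d * g w := by
      funext w
      rw [← congrFun hcd w]
      simp
    rw [hh]
    exact H.disc_affine_le hw hgne hgo c d
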